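/- For a linear functional 𝒰 on polynomials, a polynomial p, and m ≥ 0, the q-Leibniz formula D_q^m(p(x)·𝒰) = Σ_{j=0}^{m} [m choose j]_q · q^j · (D_q^j p)(q^{m-j} x) · D_q^{m-j}𝒰 holds, where [m choose j]_q is the q-binomial coefficient. -/

import Mathlib

open Polynomial Finset

noncomputable def Dq (q : ℂ) : Polynomial ℂ →ₗ[ℂ] Polynomial ℂ where
  toFun p := C (q-1)⁻¹ * (p.comp (C q * X) - p).divX
  map_add' p r := by
    ext n
    simp [add_comp, coeff_divX, coeff_C_mul, coeff_sub, coeff_add]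
    ring
  map_smul' c p := by
    ext n
    simp [smul_comp, coeff_divX, coeff_C_mul, coeff_smul, coeff_sub, smul_eq_mul]
    ring

/-- The product π·𝒰 of a polynomial and a linear functional: ⟨π𝒰, p⟩ = ⟨𝒰, πp⟩. -/
noncomputable def mulF (π : Polynomial ℂ) (U : Polynomial ℂ →ₗ[ℂ] ℂ) :
    Polynomial ℂ →ₗ[ℂ] ℂ :=
  U ∘ₗ (LinearMap.mulLeft ℂ π)

/-- The q-derivative of a functional: ⟨D_q𝒰, p⟩ = -⟨𝒰, D_{q⁻¹} p⟩. -/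
noncomputable def DqF (q : ℂ) (U : Polynomial ℂ →ₗ[ℂ] ℂ) : Polynomial ℂ →ₗ[ℂ] ℂ :=
  -(U ∘ₗ Dq q⁻¹)

/-- The q-Pochhammer symbol (a;q)_n = ∏_{k=0}^{n-1} (1 - a qᵏ). -/
noncomputable def qPoch (a q : ℂ) (n : ℕ) : ℂ := ∏ k ∈ Finset.range n, (1 - a * q ^ k)

/-- The q-binomial coefficient [m choose j]_q = (q;q)_m / ((q;q)_j (q;q)_{m-j}). -/
noncomputable def qBinom (q : ℂ) (m j : ℕ) : ℂ :=
  qPoch q q m / (qPoch q q j * qPoch q q (m - j))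

/-! ### Auxiliary lemmas -/

lemma Dq_apply' (q : ℂ) (r : ℂ[X]) : Dq q r = C (q-1)⁻¹ * (r.comp (C q * X) - r).divX := rfl

lemma X_mul_Dq (q : ℂ) (r : ℂ[X]) :
    X * Dq q r = C (q-1)⁻¹ * (r.comp (C q * X) - r) := by
  have h0 : (r.comp (C q * X) - r).coeff 0 = 0 := by
    simp [coeff_zero_eq_eval_zero]
  have h := divX_mul_X_add (r.comp (C q * X) - r)
  rw [h0, map_zero, add_zero] at h
  rw [Dq_apply']
  conv_rhs => rw [← h]
  ring_nf

lemma comp_CX_comp (r : ℂ[X]) (a b : ℂ) :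
    (r.comp (C a * X)).comp (C b * X) = r.comp (C (a*b) * X) := by
  rw [comp_assoc, mul_comp, C_comp, X_comp, ← mul_assoc, ← C_mul]

lemma comp_CX_one (r : ℂ[X]) : r.comp (C 1 * X) = r := by
  simp

lemma Dq_monomial (q : ℂ) (n : ℕ) (c : ℂ) :
    Dq q (monomial n c) = monomial (n-1) ((q^n - 1) * (q-1)⁻¹ * c) := by
  have key : (monomial n c : ℂ[X]).comp (C q * X) - monomial n c
      = C ((q^n - 1) * c) * X^n := by
    rw [monomial_comp, ← C_mul_X_pow_eq_monomial, mul_pow, ← C_pow, ← mul_assoc, ← C_mul,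
      ← sub_mul, ← map_sub]
    congr 1; ring
  rw [Dq_apply', key, divX_C_mul_X_pow]
  rcases n with _ | n
  · simp
  · simp only [Nat.succ_ne_zero, if_false, Nat.add_sub_cancel]
    rw [← mul_assoc, ← C_mul, C_mul_X_pow_eq_monomial]
    congr 1; ring

lemma Dq_pow_monomial (q : ℂ) (d n : ℕ) (c : ℂ) :
    (Dq q ^ d) (monomial n c) =
      monomial (n - d) ((∏ i ∈ Finset.range d, (q^(n-i) - 1) * (q-1)⁻¹) * c) := by
  induction d generalizing n c with
  | zero => simp
  | succ d ih =>
    rw [pow_succ, Module.End.mul_apply, Dq_monomial q n c, ih]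
    rw [show n - 1 - d = n - (d+1) from by omega]
    congr 1
    rw [prod_range_succ']
    have h1 : ∀ i : ℕ, n - 1 - i = n - (i+1) := fun i => by omega
    simp only [h1, Nat.sub_zero]
    ring

lemma Dq_pow_eq_zero (q : ℂ) (d : ℕ) (hd : 0 < d) (h : q ^ d = 1) : (Dq q) ^ d = 0 := by
  apply LinearMap.ext; intro p
  rw [LinearMap.zero_apply]
  induction p using Polynomial.induction_on' with
  | add f g hf hg => simp [map_add, hf, hg]
  | monomial n c =>
    rw [Dq_pow_monomial]
    have : ∏ i ∈ Finset.range d, ((q^(n-i) - 1) * (q-1)⁻¹) = 0 := by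
      apply Finset.prod_eq_zero (Finset.mem_range.mpr (Nat.mod_lt n hd))
      have h2 := Nat.mod_add_div n d
      have hsub : n - n % d = d * (n / d) := by omega
      rw [hsub, pow_mul, h, one_pow, sub_self, zero_mul]
    rw [this, zero_mul]
    simp

lemma key_identity (q : ℂ) (hq0 : q ≠ 0) (π p : ℂ[X]) :
    π * Dq q⁻¹ p = Dq q⁻¹ (π.comp (C q * X) * p) - q • ((Dq q π) * p) := by
  have hX : (X : ℂ[X]) ≠ 0 := X_ne_zero
  apply mul_left_cancel₀ hX
  have e1 : X * (π * Dq q⁻¹ p) = π * (X * Dq q⁻¹ p) := by ring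
  have e2 : X * (Dq q⁻¹ (π.comp (C q * X) * p) - q • ((Dq q π) * p))
      = X * Dq q⁻¹ (π.comp (C q * X) * p) - C q * ((X * Dq q π) * p) := by
    rw [smul_eq_C_mul]; ring
  rw [e1, e2, X_mul_Dq, X_mul_Dq, X_mul_Dq]
  rw [mul_comp, comp_CX_comp]
  rw [mul_inv_cancel₀ hq0, comp_CX_one]
  have hc : (q⁻¹ - 1)⁻¹ = -(q * (q-1)⁻¹) := by
    have h1 : q⁻¹ - 1 = -(q-1) * q⁻¹ := by
      field_simp
      ring
    rw [h1, mul_inv, inv_neg, inv_inv]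
    ring
  rw [hc]
  rw [map_neg, map_mul]
  ring

lemma Dq_comp_scale (q a : ℂ) (r : ℂ[X]) :
    Dq q (r.comp (C a * X)) = a • ((Dq q r).comp (C a * X)) := by
  have hX : (X : ℂ[X]) ≠ 0 := X_ne_zero
  apply mul_left_cancel₀ hX
  rw [X_mul_Dq, comp_CX_comp]
  have h2 : (C a * X) * ((Dq q r).comp (C a * X))
      = C (q-1)⁻¹ * (r.comp (C (q*a) * X) - r.comp (C a * X)) := by
    have := congrArg (fun s => s.comp (C a * X)) (X_mul_Dq q r)
    simpa [mul_comp, sub_comp, comp_CX_comp] using this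
  have h3 : X * (a • ((Dq q r).comp (C a * X)))
      = C (q-1)⁻¹ * (r.comp (C (q*a) * X) - r.comp (C a * X)) := by
    rw [smul_eq_C_mul, ← h2]
    ring
  rw [h3, mul_comm a q]

lemma mulF_apply (π : ℂ[X]) (U : Polynomial ℂ →ₗ[ℂ] ℂ) (p : ℂ[X]) :
    mulF π U p = U (π * p) := rfl

lemma DqF_apply (q : ℂ) (U : Polynomial ℂ →ₗ[ℂ] ℂ) (p : ℂ[X]) :
    DqF q U p = -(U (Dq q⁻¹ p)) := rfl

lemma mulF_zero (U : Polynomial ℂ →ₗ[ℂ] ℂ) : mulF 0 U = 0 := by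
  apply LinearMap.ext; intro p
  simp [mulF_apply]

lemma mulF_zero_right (π : ℂ[X]) : mulF π 0 = 0 := by
  apply LinearMap.ext; intro p
  simp [mulF_apply]

lemma mulF_smul_left (c : ℂ) (π : ℂ[X]) (U : Polynomial ℂ →ₗ[ℂ] ℂ) :
    mulF (c • π) U = c • mulF π U := by
  apply LinearMap.ext; intro p
  simp [mulF_apply, smul_mul_assoc]

lemma DqF_add (q : ℂ) (U V : Polynomial ℂ →ₗ[ℂ] ℂ) :
    DqF q (U + V) = DqF q U + DqF q V := by
  apply LinearMap.ext; intro p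
  simp [DqF_apply]
  ring

lemma DqF_smul (q : ℂ) (c : ℂ) (U : Polynomial ℂ →ₗ[ℂ] ℂ) :
    DqF q (c • U) = c • DqF q U := by
  apply LinearMap.ext; intro p
  simp [DqF_apply]

lemma DqF_zero (q : ℂ) : DqF q 0 = 0 := by
  apply LinearMap.ext; intro p
  simp [DqF_apply]

lemma DqF_sum (q : ℂ) (s : Finset ℕ) (f : ℕ → (Polynomial ℂ →ₗ[ℂ] ℂ)) :
    DqF q (∑ j ∈ s, f j) = ∑ j ∈ s, DqF q (f j) := by
  classical
  induction s using Finset.induction_on with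
  | empty => simp [DqF_zero]
  | insert _ _ hx ih => rw [Finset.sum_insert hx, Finset.sum_insert hx, DqF_add, ih]

lemma DqF_iterate (q : ℂ) (k : ℕ) (U : Polynomial ℂ →ₗ[ℂ] ℂ) :
    (DqF q)^[k] U = ((-1:ℂ)^k) • (U ∘ₗ ((Dq q⁻¹)^k)) := by
  induction k with
  | zero =>
    apply LinearMap.ext; intro p
    simp
  | succ k ih =>
    rw [Function.iterate_succ_apply', ih]
    apply LinearMap.ext; intro p
    rw [DqF_smul, pow_succ, pow_succ]
    simp only [LinearMap.smul_apply, DqF_apply, LinearMap.comp_apply, Module.End.mul_apply,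
      smul_eq_mul]
    ring

lemma DqF_iterate_eq_zero (q : ℂ) (d k : ℕ) (hdk : d ≤ k)
    (hnil : (Dq q⁻¹)^d = 0) (U : Polynomial ℂ →ₗ[ℂ] ℂ) :
    (DqF q)^[k] U = 0 := by
  rw [DqF_iterate]
  have h : (Dq q⁻¹)^k = 0 := by
    rw [show k = d + (k - d) by omega, pow_add, hnil, zero_mul]
  rw [h, LinearMap.comp_zero, smul_zero]

lemma prod_rule (q : ℂ) (hq0 : q ≠ 0) (π : ℂ[X]) (U : Polynomial ℂ →ₗ[ℂ] ℂ) :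
    DqF q (mulF π U) = mulF (π.comp (C q * X)) (DqF q U) + q • mulF (Dq q π) U := by
  apply LinearMap.ext; intro p
  simp only [LinearMap.add_apply, LinearMap.smul_apply, DqF_apply, mulF_apply, smul_eq_mul]
  rw [key_identity q hq0 π p, map_sub, map_smul]
  simp only [smul_eq_mul]
  ring

/-! ### Gaussian binomial coefficients -/

noncomputable def gauss (q : ℂ) : ℕ → ℕ → ℂ
  | _, 0 => 1
  | 0, _ + 1 => 0
  | m + 1, j + 1 => gauss q m (j+1) + q^(m-j) * gauss q m j

lemma gauss_succ_succ (q : ℂ) (m j : ℕ) :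
    gauss q (m+1) (j+1) = gauss q m (j+1) + q^(m-j) * gauss q m j := rfl

lemma gauss_zero_right (q : ℂ) (m : ℕ) : gauss q m 0 = 1 := by
  cases m <;> rfl

lemma gauss_eq_zero (q : ℂ) (m j : ℕ) (h : m < j) : gauss q m j = 0 := by
  induction m generalizing j with
  | zero => cases j with | zero => omega | succ j => rfl
  | succ m ih =>
    cases j with
    | zero => omega
    | succ j =>
      rw [gauss_succ_succ, ih (j+1) (by omega), ih j (by omega), mul_zero, add_zero]

lemma gauss_diag (q : ℂ) (m : ℕ) : gauss q m m = 1 := by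
  induction m with
  | zero => rfl
  | succ m ih =>
    rw [gauss_succ_succ, gauss_eq_zero q m (m+1) (by omega), ih, Nat.sub_self, pow_zero,
      one_mul, zero_add]

lemma qPoch_succ (a q : ℂ) (n : ℕ) : qPoch a q (n+1) = qPoch a q n * (1 - a * q^n) := by
  rw [qPoch, qPoch, prod_range_succ]

lemma qPoch_zero (a q : ℂ) : qPoch a q 0 = 1 := rfl

lemma qPoch_q_succ (q : ℂ) (n : ℕ) : qPoch q q (n+1) = qPoch q q n * (1 - q^(n+1)) := by
  rw [qPoch_succ, ← pow_succ']

lemma gauss_mul_qPoch (q : ℂ) (m j : ℕ) (h : j ≤ m) :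
    qPoch q q m = gauss q m j * (qPoch q q j * qPoch q q (m - j)) := by
  induction m generalizing j with
  | zero =>
    interval_cases j
    simp [gauss_zero_right, qPoch_zero]
  | succ m ih =>
    cases j with
    | zero => simp [gauss_zero_right, qPoch_zero]
    | succ i =>
      have hi : i ≤ m := by omega
      rw [show m + 1 - (i+1) = m - i from by omega, gauss_succ_succ]
      rcases Nat.lt_or_ge i m with him | him
      · have ih1 := ih (i+1) (by omega)
        have ih2 := ih i hi
        have h3 : qPoch q q (m - i) = qPoch q q (m - (i+1)) * (1 - q^(m-i)) := by
          have e : (m - (i+1)) + 1 = m - i := by omega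
          rw [← e, qPoch_q_succ]
        have h4 : qPoch q q (i+1) = qPoch q q i * (1 - q^(i+1)) := qPoch_q_succ q i
        have h5 : q^(m-i) * q^(i+1) = q^(m+1) := by
          rw [← pow_add]; congr 1; omega
        rw [qPoch_q_succ]
        linear_combination (1 - q^(m-i)) * ih1 + (q^(m-i) * (1 - q^(i+1))) * ih2
          - (gauss q m (i+1) * qPoch q q (i+1)) * h3
          - (q^(m-i) * gauss q m i * qPoch q q (m-i)) * h4
          + qPoch q q m * h5
      · have : i = m := by omega
        subst this
        rw [gauss_eq_zero q i (i+1) (by omega), gauss_diag, Nat.sub_self, pow_zero, qPoch_zero]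
        ring

lemma qPoch_eq_zero_iff (q : ℂ) (n : ℕ) :
    qPoch q q n = 0 ↔ ∃ k < n, q^(k+1) = 1 := by
  rw [qPoch, Finset.prod_eq_zero_iff]
  constructor
  · rintro ⟨k, hk, hk2⟩
    exact ⟨k, Finset.mem_range.mp hk, by rw [pow_succ']; linear_combination -hk2⟩
  · rintro ⟨k, hk, hk2⟩
    exact ⟨k, Finset.mem_range.mpr hk, by rw [← pow_succ'] ; linear_combination -hk2⟩

/-! ### The main result with Gaussian binomials -/

theorem stmt5_gauss (q : ℂ) (hq0 : q ≠ 0)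
    (U : Polynomial ℂ →ₗ[ℂ] ℂ) (p : Polynomial ℂ) (m : ℕ) :
    (DqF q)^[m] (mulF p U) =
      ∑ j ∈ Finset.range (m + 1), (gauss q m j * q ^ j) •
        mulF (((Dq q ^ j) p).comp (C (q ^ (m - j)) * X)) ((DqF q)^[m - j] U) := by
  induction m with
  | zero =>
    simp [Finset.sum_range_one, gauss_zero_right, comp_CX_one]
  | succ m ih =>
    rw [Function.iterate_succ_apply', ih, DqF_sum]
    have step : ∀ j ∈ Finset.range (m+1),
        DqF q ((gauss q m j * q ^ j) •
          mulF (((Dq q ^ j) p).comp (C (q ^ (m - j)) * X)) ((DqF q)^[m - j] U))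
        = (gauss q m j * q ^ j) •
            mulF (((Dq q ^ j) p).comp (C (q ^ (m + 1 - j)) * X)) ((DqF q)^[m + 1 - j] U)
          + (gauss q m j * q ^ (m+1)) •
            mulF (((Dq q ^ (j+1)) p).comp (C (q ^ (m + 1 - (j+1))) * X))
              ((DqF q)^[m + 1 - (j+1)] U) := by
      intro j hj
      have hj' : j ≤ m := by
        have := Finset.mem_range.mp hj; omega
      rw [show m + 1 - j = (m - j) + 1 from by omega, Nat.succ_sub_succ]
      rw [DqF_smul, prod_rule q hq0, smul_add]
      congr 1
      · rw [comp_CX_comp, ← pow_succ, ← Function.iterate_succ_apply' (DqF q) (m-j) U]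
      · rw [Dq_comp_scale, mulF_smul_left]
        have hD : Dq q ((Dq q ^ j) p) = (Dq q ^ (j+1)) p := by
          rw [pow_succ', Module.End.mul_apply]
        rw [hD, smul_smul, smul_smul]
        congr 1
        rw [mul_assoc, ← pow_succ', mul_assoc, ← pow_add]
        congr 2
        omega
    rw [Finset.sum_congr rfl step, Finset.sum_add_distrib]
    have keycoeff : ∀ j ∈ Finset.range (m+2),
        (gauss q (m+1) j * q ^ j) •
          mulF (((Dq q ^ j) p).comp (C (q ^ (m + 1 - j)) * X)) ((DqF q)^[m + 1 - j] U)
        = (gauss q m j * q ^ j) •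
            mulF (((Dq q ^ j) p).comp (C (q ^ (m + 1 - j)) * X)) ((DqF q)^[m + 1 - j] U)
          + (if j = 0 then 0 else (gauss q m (j-1) * q ^ (m+1)) •
              mulF (((Dq q ^ j) p).comp (C (q ^ (m + 1 - j)) * X)) ((DqF q)^[m + 1 - j] U)) := by
      intro j hj
      rcases j with _ | i
      · simp [gauss_zero_right]
      · rw [if_neg (Nat.succ_ne_zero i), gauss_succ_succ, Nat.add_sub_cancel, ← add_smul]
        congr 1
        have hi : i ≤ m := by
          have := Finset.mem_range.mp hj; omega
        have h5 : q^(m-i) * q^(i+1) = q^(m+1) := by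
          rw [← pow_add]; congr 1; omega
        linear_combination gauss q m i * h5
    rw [Finset.sum_congr rfl keycoeff, Finset.sum_add_distrib]
    congr 1
    · conv_rhs => rw [Finset.sum_range_succ]
      rw [gauss_eq_zero q m (m+1) (by omega), zero_mul, zero_smul, add_zero]
    · conv_rhs => rw [Finset.sum_range_succ']
      simp only [Nat.succ_ne_zero, if_false, if_true, Nat.add_sub_cancel, add_zero]

/-- q-Leibniz formula
D_q^m(p𝒰) = Σ_{j=0}^m [m choose j]_q qʲ (D_q^j p)(q^{m-j}x) D_q^{m-j}𝒰. -/
theorem stmt5 (q : ℂ) (hq0 : q ≠ 0) (hq1 : q ≠ 1) (hqm1 : q ≠ -1)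
    (U : Polynomial ℂ →ₗ[ℂ] ℂ) (p : Polynomial ℂ) (m : ℕ) :
    (DqF q)^[m] (mulF p U) =
      ∑ j ∈ Finset.range (m + 1), (qBinom q m j * q ^ j) •
        mulF (((Dq q ^ j) p).comp (C (q ^ (m - j)) * X)) ((DqF q)^[m - j] U) := by
  rw [stmt5_gauss q hq0 U p m]
  apply Finset.sum_congr rfl
  intro j hj
  have hjm : j ≤ m := by
    have := Finset.mem_range.mp hj; omega
  by_cases hz1 : qPoch q q j = 0
  · obtain ⟨k, hk, hk1⟩ := (qPoch_eq_zero_iff q j).mp hz1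
    have hd : (Dq q) ^ (k+1) = 0 := Dq_pow_eq_zero q (k+1) (Nat.succ_pos k) hk1
    have hDj : (Dq q ^ j) p = 0 := by
      rw [show j = (j - (k+1)) + (k+1) from by omega, pow_add, Module.End.mul_apply, hd,
        LinearMap.zero_apply, map_zero]
    rw [hDj, zero_comp, mulF_zero, smul_zero, smul_zero]
  · by_cases hz2 : qPoch q q (m - j) = 0
    · obtain ⟨k, hk, hk1⟩ := (qPoch_eq_zero_iff q (m-j)).mp hz2
      have hnil : (Dq q⁻¹) ^ (k+1) = 0 := by
        apply Dq_pow_eq_zero q⁻¹ (k+1) (Nat.succ_pos k)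
        rw [inv_pow, hk1, inv_one]
      have hz : (DqF q)^[m - j] U = 0 :=
        DqF_iterate_eq_zero q (k+1) (m-j) (by omega) hnil U
      rw [hz, mulF_zero_right, smul_zero, smul_zero]
    · have hb : qBinom q m j = gauss q m j := by
        rw [qBinom, gauss_mul_qPoch q m j hjm, mul_div_assoc,
          div_self (mul_ne_zero hz1 hz2), mul_one]
      rw [hb]
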